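/- Let C₁ ⊂ C₂ ⊆ F_q^n be linear codes over a finite field F_q with dim C₁ = k₁ and dim C₂ = k₁ + k, k ≥ 1, and suppose every codeword in C₂ \ C₁ has Hamming weight at least d. Then there exists a linear [n - k₁, k] code over F_q with minimum distance at least d. -/

import Mathlib

open Finset

lemma exists_info_set {n : ℕ} {F : Type} [Field F] (V : Submodule F (Fin n → F)) :
    ∃ S : Finset (Fin n), S.card = Module.finrank F V ∧
      ∀ v ∈ V, (∀ i ∈ S, v i = 0) → v = 0 := by
  classical
  set φ : Fin n → Module.Dual F V := fun i => (LinearMap.proj i).comp V.subtype with hφ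
  have hco : (Submodule.span F (Set.range φ)).dualCoannihilator = ⊥ := by
    rw [eq_bot_iff]
    intro x hx
    have hx' : ∀ i, φ i x = 0 := fun i =>
      (Submodule.mem_dualCoannihilator x).mp hx (φ i) (Submodule.subset_span ⟨i, rfl⟩)
    have : (x : Fin n → F) = 0 := funext fun i => hx' i
    exact Submodule.mem_bot F |>.mpr (Subtype.ext this)
  have hspan : Submodule.span F (Set.range φ) = ⊤ := by
    apply Submodule.eq_top_of_finrank_eq
    have h1 := Subspace.finrank_add_finrank_dualCoannihilator_eq (Submodule.span F (Set.range φ))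
    rw [hco] at h1
    simp only [finrank_bot, add_zero] at h1
    rw [h1, Subspace.dual_finrank_eq]
  obtain ⟨b, hbsub, hbspan, hbind⟩ := exists_linearIndependent F (Set.range φ)
  rw [hspan] at hbspan
  have hbfin : b.Finite := Set.Finite.subset (Set.finite_range φ) hbsub
  haveI := hbfin.fintype
  have hcard : hbfin.toFinset.card = Module.finrank F V := by
    have B : Module.Basis b F (Module.Dual F V) :=
      Module.Basis.mk hbind (by rw [← hbspan]; exact le_of_eq (by rw [Subtype.range_coe]))
    rw [Set.Finite.card_toFinset]
    rw [← Subspace.dual_finrank_eq (K := F) (V := V)]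
    rw [Module.finrank_eq_card_basis B]
  choose g hg using fun x : b => hbsub x.2
  have hginj : Function.Injective g := fun x y hxy => by
    apply Subtype.ext
    rw [← hg x, ← hg y, hxy]
  refine ⟨Finset.image g Finset.univ, ?_, ?_⟩
  · rw [Finset.card_image_of_injective _ hginj, Finset.card_univ, ← hcard,
      Set.Finite.card_toFinset]
  · intro v hv hvS
    have hb0 : ∀ x : b, (x : Module.Dual F V) ⟨v, hv⟩ = 0 := by
      intro x
      have : φ (g x) ⟨v, hv⟩ = 0 := hvS (g x) (Finset.mem_image_of_mem g (Finset.mem_univ x))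
      rw [hg x] at this
      exact this
    have hall : ∀ ψ : Module.Dual F V, ψ ⟨v, hv⟩ = 0 := by
      intro ψ
      have hle : Submodule.span F b ≤ LinearMap.ker (LinearMap.applyₗ (⟨v, hv⟩ : V)) := by
        rw [Submodule.span_le]
        rintro x hx
        exact hb0 ⟨x, hx⟩
      rw [hbspan] at hle
      exact hle Submodule.mem_top
    funext i
    exact hall (φ i)

set_option synthInstance.maxHeartbeats 1000000 in
set_option maxHeartbeats 1000000 in
theorem stmt_8 (q n k k₁ : ℕ) (F : Type) [Field F] [Fintype F] [DecidableEq F] (hF : Fintype.card F = q)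
    (C₁ C₂ : Submodule F (Fin n → F)) (hsub : C₁ < C₂)
    (hk₁ : Module.finrank F C₁ = k₁) (hk₂ : Module.finrank F C₂ = k₁ + k) (hk : 1 ≤ k)
    (d : ℕ) (hd : ∀ v ∈ C₂, v ∉ C₁ → d ≤ hammingNorm v) :
    ∃ D : Submodule F (Fin (n - k₁) → F), Module.finrank F D = k ∧
      ∀ v ∈ D, v ≠ 0 → d ≤ hammingNorm v := by
  classical
  obtain ⟨S, hScard, hSinj⟩ := exists_info_set C₁
  rw [hk₁] at hScard
  -- restriction maps
  set res : (Fin n → F) →ₗ[F] ({ i // i ∈ S } → F) :=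
    LinearMap.funLeft F F Subtype.val with hres
  set r : C₁ →ₗ[F] ({ i // i ∈ S } → F) := res.comp C₁.subtype with hr
  have hrinj : Function.Injective r := by
    rw [← LinearMap.ker_eq_bot, eq_bot_iff]
    rintro ⟨x, hx⟩ hxk
    have hx0 : x = 0 := by
      refine hSinj x hx fun i hi => ?_
      exact congrFun (LinearMap.mem_ker.mp hxk) ⟨i, hi⟩
    exact Submodule.mem_bot F |>.mpr (Subtype.ext hx0)
  have hdim : Module.finrank F C₁ = Module.finrank F ({ i // i ∈ S } → F) := by
    rw [hk₁, Module.finrank_fintype_fun_eq_card, Fintype.card_coe, hScard]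
  have hrsurj : Function.Surjective r :=
    (LinearMap.injective_iff_surjective_of_finrank_eq_finrank hdim).mp hrinj
  let e : C₁ ≃ₗ[F] ({ i // i ∈ S } → F) := LinearEquiv.ofBijective r ⟨hrinj, hrsurj⟩
  set σ : ({ i // i ∈ S } → F) →ₗ[F] (Fin n → F) :=
    C₁.subtype.comp e.symm.toLinearMap with hσ
  set w : (Fin n → F) →ₗ[F] (Fin n → F) := LinearMap.id - σ.comp res with hw
  have hσmem : ∀ u, σ u ∈ C₁ := fun u => (e.symm u).2
  have hresσ : ∀ u, res (σ u) = u := by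
    intro u
    have : res (σ u) = r (e.symm u) := rfl
    rw [this]
    exact e.apply_symm_apply u
  have hwS : ∀ v, ∀ i ∈ S, w v i = 0 := by
    intro v i hi
    have : res (w v) = 0 := by
      simp only [hw, LinearMap.sub_apply, map_sub, LinearMap.id_coe, id_eq,
        LinearMap.coe_comp, Function.comp_apply, hresσ, sub_self]
    exact congrFun this ⟨i, hi⟩
  have hwzero : ∀ v ∈ C₁, w v = 0 := by
    intro v hv
    have hσv : σ (res v) = v := by
      have h1 : res v = r ⟨v, hv⟩ := rfl
      have h2 : r ⟨v, hv⟩ = e ⟨v, hv⟩ := rfl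
      rw [hσ]
      simp only [LinearMap.coe_comp, Function.comp_apply, h1, h2, LinearEquiv.coe_coe,
        LinearEquiv.symm_apply_apply]
      rfl
    simp [hw, hσv]
  have hwC₂ : ∀ v ∈ C₂, w v ∈ C₂ := by
    intro v hv
    simpa [hw] using sub_mem hv (hsub.le (hσmem (res v)))
  have hwnotC₁ : ∀ v, v ∉ C₁ → w v ∉ C₁ := by
    intro v hv hwv
    apply hv
    have : v = w v + σ (res v) := by simp [hw]
    rw [this]
    exact add_mem hwv (hσmem (res v))
  -- the equiv between Sᶜ and Fin (n - k₁)
  have hTcard : Fintype.card { i // i ∈ Sᶜ } = n - k₁ := by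
    rw [Fintype.card_coe, Finset.card_compl, Fintype.card_fin, hScard]
  let e2 : { i // i ∈ Sᶜ } ≃ Fin (n - k₁) := Fintype.equivFinOfCardEq hTcard
  set ψ : (Fin n → F) →ₗ[F] (Fin (n - k₁) → F) :=
    (LinearMap.funLeft F F (fun j => ((e2.symm j : { i // i ∈ Sᶜ }) : Fin n))).comp w with hψ
  have hψapp : ∀ v j, ψ v j = w v (e2.symm j : { i // i ∈ Sᶜ }) := fun v j => rfl
  -- weight comparison
  have hweight : ∀ v, hammingNorm (w v) = hammingNorm (ψ v) := by
    intro v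
    unfold hammingNorm
    refine Finset.card_bij (fun i hi => e2 ⟨i, ?_⟩) ?_ ?_ ?_
    · rw [Finset.mem_compl]
      intro hiS
      exact (Finset.mem_filter.mp hi).2 (hwS v i hiS)
    · intro a ha
      rw [Finset.mem_filter]
      refine ⟨Finset.mem_univ _, ?_⟩
      rw [hψapp, Equiv.symm_apply_apply]
      exact (Finset.mem_filter.mp ha).2
    · intro a ha b hb hab
      have := congrArg (fun x => ((e2.symm x : { i // i ∈ Sᶜ }) : Fin n)) hab
      simpa [Equiv.symm_apply_apply] using this
    · intro j hj
      refine ⟨(e2.symm j : { i // i ∈ Sᶜ }), ?_, ?_⟩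
      · rw [Finset.mem_filter]
        exact ⟨Finset.mem_univ _, by rw [← hψapp]; exact (Finset.mem_filter.mp hj).2⟩
      · simp
  have hker0 : ∀ v, ψ v = 0 → v ∈ C₁ := by
    intro v h
    have hw0 : w v = 0 := by
      have h2 := hweight v
      rw [h, hammingNorm_zero] at h2
      exact hammingNorm_eq_zero.mp h2
    have hv' : v = σ (res v) :=
      sub_eq_zero.mp (by simpa [hw] using hw0)
    rw [hv']
    exact hσmem _
  have hψzero : ∀ v ∈ C₁, ψ v = 0 := by
    intro v hv
    rw [hψ]
    simp only [LinearMap.coe_comp, Function.comp_apply, hwzero v hv, map_zero]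
  refine ⟨Submodule.map ψ C₂, ?_, ?_⟩
  · have hker : LinearMap.ker (ψ.comp C₂.subtype) = Submodule.comap C₂.subtype C₁ := by
      ext x
      simp only [LinearMap.mem_ker, Submodule.mem_comap, LinearMap.coe_comp,
        Function.comp_apply, Submodule.coe_subtype]
      exact ⟨fun h => hker0 _ h, fun h => hψzero _ h⟩
    have h1 := LinearMap.finrank_range_add_finrank_ker (ψ.comp C₂.subtype)
    rw [hker] at h1
    have h2 : Module.finrank F (Submodule.comap C₂.subtype C₁) = k₁ := by
      rw [LinearEquiv.finrank_eq (Submodule.comapSubtypeEquivOfLe hsub.le), hk₁]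
    have h3 : LinearMap.range (ψ.comp C₂.subtype) = Submodule.map ψ C₂ := by
      rw [LinearMap.range_comp, Submodule.range_subtype]
    rw [h2, h3, hk₂] at h1
    omega
  · rintro x ⟨v, hv, rfl⟩ hx0
    have hvC₁ : v ∉ C₁ := fun h => hx0 (hψzero v h)
    calc d ≤ hammingNorm (w v) := hd (w v) (hwC₂ v hv) (hwnotC₁ v hvC₁)
    _ = hammingNorm (ψ v) := hweight v
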